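/- Let 𝒟 = {𝒞₁,…,𝒞_m} be a family of coverings of the finite universe U = {x₁,…,xₙ}, and let 𝒞 = 𝒞₁ ∪ ⋯ ∪ 𝒞_m be the covering of U consisting of all blocks of all members of 𝒟. Then for all i, j: the (i,j) entry of the type-2 characteristic matrix Π(𝒟) = M_𝒟 ⊙ M_𝒟ᵀ equals 1 if and only if x_j ∈ N(x_i), where N(x) = ⋂{C ∈ 𝒞 : x ∈ C}. -/

import Mathlib

/-- Boolean product of Boolean matrices: `(A • B) i j = ⋁ k, A i k ∧ B k j`. -/
def bDot {α β γ : Type*} [Fintype β] (A : α → β → Bool) (B : β → γ → Bool) :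
    α → γ → Bool := fun i j => decide (∃ k, A i k = true ∧ B k j = true)

/-- The `⊙` product of Boolean matrices: `(A ⊙ B) i j = 1` iff `A i k ≤ B k j` for all `k`. -/
def oDot {α β γ : Type*} [Fintype β] (A : α → β → Bool) (B : β → γ → Bool) :
    α → γ → Bool := fun i j => decide (∀ k, A i k ≤ B k j)

/-- Matrix representation of a family of subsets of `Fin n` indexed by `ι`. -/
def Mrep {n : ℕ} {ι : Type*} (C : ι → Finset (Fin n)) : Fin n → ι → Bool :=
  fun i j => decide (i ∈ C j)

/-- Type-1 characteristic matrix `Γ(𝒞) = M_𝒞 • M_𝒞ᵀ`. -/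
def Gamma {n : ℕ} {ι : Type*} [Fintype ι] (C : ι → Finset (Fin n)) :
    Fin n → Fin n → Bool :=
  bDot (Mrep C) (fun k j => Mrep C j k)

/-- Type-2 characteristic matrix `Π(𝒞) = M_𝒞 ⊙ M_𝒞ᵀ`. -/
def Pi2 {n : ℕ} {ι : Type*} [Fintype ι] (C : ι → Finset (Fin n)) :
    Fin n → Fin n → Bool :=
  oDot (Mrep C) (fun k j => Mrep C j k)

/-- An indexed family of subsets of `Fin n` is a covering: all blocks nonempty
and they cover the universe. -/
def IsCovering {n : ℕ} {ι : Type*} (C : ι → Finset (Fin n)) : Prop :=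
  (∀ k, (C k).Nonempty) ∧ ∀ x : Fin n, ∃ k, x ∈ C k

/-- The neighborhood of `x` with respect to all blocks of all coverings in the
family: `N(x) = ⋂ {C : x ∈ C}`. -/
def Nall {n m : ℕ} {c : Fin m → ℕ}
    (D : (t : Fin m) → Fin (c t) → Finset (Fin n)) (x : Fin n) : Set (Fin n) :=
  ⋂ (t : Fin m), ⋂ (k : Fin (c t)), ⋂ (_ : x ∈ D t k), (D t k : Set (Fin n))

/-- `Π(𝒟)_{ij} = 1` iff `x_j ∈ N(x_i)`, where `N(x)` is the intersection of all
blocks (of all coverings of 𝒟) containing `x`. -/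
theorem pi_entry_iff {n m : ℕ} (c : Fin m → ℕ)
    (D : (t : Fin m) → Fin (c t) → Finset (Fin n))
    (hD : ∀ t, IsCovering (D t)) :
    ∀ i j : Fin n,
      Pi2 (fun q : Σ t : Fin m, Fin (c t) => D q.1 q.2) i j = true ↔
        j ∈ Nall D i := by
  intro i j
  simp only [Pi2, oDot, Mrep, Nall, decide_eq_true_eq, Set.mem_iInter,
    Finset.mem_coe]
  constructor
  · intro h t k hik
    have := (of_decide_eq_true h) ⟨t, k⟩
    simp [hik] at this
    exact of_decide_eq_true (Bool.eq_true_of_true_le this)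
  · intro h; apply decide_eq_true; intro q
    by_cases hi : i ∈ D q.1 q.2
    · simp [hi, h q.1 q.2 hi]
    · simp [hi]
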